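/- Let f be a harmonic multilinear polynomial in x₁,…,xₙ with (unique) expansion f = ∑_{B ∈ B_n} f̂(B) χ_B over the top sets B of [n], and let m ∈ [n]. Then the average of f^π over all permutations π of [m] (where f^π denotes f with its variables permuted by π) equals ∑_{B ∈ B_n, B ∩ [m] = ∅} f̂(B) χ_B. In particular, f is invariant under all permutations of the first m coordinates if and only if f̂(B) = 0 for every top set B intersecting [m]. -/

import Mathlib

open MvPolynomial

/-- A multilinear polynomial: every monomial is squarefree. -/
def IsMultilinear {n : ℕ} (P : MvPolynomial (Fin n) ℝ) : Prop :=
  ∀ m ∈ P.support, ∀ i, m i ≤ 1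

/-- A harmonic polynomial: the sum of all partial derivatives vanishes. -/
def IsHarmonic {n : ℕ} (P : MvPolynomial (Fin n) ℝ) : Prop :=
  ∑ i, MvPolynomial.pderiv i P = 0

/-- `B : Fin d → Fin n` is a top set if it is strictly increasing and there is a
sequence `A` of `d` distinct elements, disjoint from `B`, with `A i < B i` for all `i`. -/
def IsTopSet {n d : ℕ} (B : Fin d → Fin n) : Prop :=
  StrictMono B ∧ ∃ A : Fin d → Fin n,
    Function.Injective A ∧ (∀ i j, A i ≠ B j) ∧ ∀ i, A i < B i

/-- `χ_{A,B} = ∏ i (x_{a_i} - x_{b_i})`. -/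
noncomputable def chiAB {n d : ℕ} (A B : Fin d → Fin n) : MvPolynomial (Fin n) ℝ :=
  ∏ i, (X (A i) - X (B i))

open Classical in
/-- `χ_B = ∑_{A < B, A disjoint from B} χ_{A,B}`. -/
noncomputable def chiB {n d : ℕ} (B : Fin d → Fin n) : MvPolynomial (Fin n) ℝ :=
  ∑ A ∈ Finset.univ.filter (fun A : Fin d → Fin n =>
      Function.Injective A ∧ (∀ i j, A i ≠ B j) ∧ ∀ i, A i < B i),
    chiAB A B

lemma rename_chiAB {n d : ℕ} (π : Equiv.Perm (Fin n)) (A B : Fin d → Fin n) :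
    rename ⇑π (chiAB A B) = chiAB (⇑π ∘ A) (⇑π ∘ B) := by
  simp [chiAB, map_prod]

lemma perm_lt_of_fixes {n m : ℕ} (π : Equiv.Perm (Fin n))
    (hπ : ∀ i : Fin n, m ≤ (i : ℕ) → π i = i) {x : Fin n} (hx : (x : ℕ) < m) :
    ((π x : Fin n) : ℕ) < m := by
  by_contra h
  push_neg at h
  have h2 := hπ (π x) h
  have := π.injective h2
  rw [this] at h
  omega

open Classical in
lemma rename_chiB_invariant {n d m : ℕ} (B : Fin d → Fin n) (hB : ∀ i, m ≤ (B i : ℕ))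
    (π : Equiv.Perm (Fin n)) (hπ : ∀ i : Fin n, m ≤ (i : ℕ) → π i = i) :
    rename ⇑π (chiB B) = chiB B := by
  unfold chiB
  rw [map_sum]
  have hπB : ∀ x : Fin n, m ≤ (x : ℕ) → π x = x := hπ
  have hfix : ∀ i, π (B i) = B i := fun i => hπ (B i) (hB i)
  have hlt : ∀ x : Fin n, (x : ℕ) < m → ((π x : Fin n) : ℕ) < m := fun x hx =>
    perm_lt_of_fixes π hπ hx
  refine Finset.sum_nbij' (fun A => ⇑π ∘ A) (fun A => ⇑π⁻¹ ∘ A) ?_ ?_ ?_ ?_ ?_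
  · intro A hA
    simp only [Finset.mem_filter, Finset.mem_univ, true_and] at hA ⊢
    obtain ⟨hinj, hdisj, hlt'⟩ := hA
    refine ⟨fun i j hij => hinj (π.injective hij), fun i j hne => ?_, fun i => ?_⟩
    · simp only [Function.comp_apply] at hne
      rcases lt_or_ge ((A i : ℕ)) m with h | h
      · exact absurd hne (by
          have := hlt (A i) h
          have hBj := hB j
          intro hEq
          rw [hEq] at this
          omega)
      · rw [hπ (A i) h] at hne; exact hdisj i j hne
    · simp only [Function.comp_apply]
      rcases lt_or_ge ((A i : ℕ)) m with h | h
      · have := hlt (A i) h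
        have := hB i
        exact Fin.lt_def.mpr (by omega)
      · rw [hπ (A i) h]; exact hlt' i
  · intro A hA
    simp only [Finset.mem_filter, Finset.mem_univ, true_and] at hA ⊢
    obtain ⟨hinj, hdisj, hlt'⟩ := hA
    have hπinv : ∀ i : Fin n, m ≤ (i : ℕ) → π⁻¹ i = i := by
      intro i hi
      have := hπ i hi
      exact π.injective (by simp [this])
    have hltinv : ∀ x : Fin n, (x : ℕ) < m → ((π⁻¹ x : Fin n) : ℕ) < m := fun x hx =>
      perm_lt_of_fixes π⁻¹ hπinv hx
    refine ⟨fun i j hij => hinj (π⁻¹.injective hij), fun i j hne => ?_, fun i => ?_⟩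
    · simp only [Function.comp_apply] at hne
      rcases lt_or_ge ((A i : ℕ)) m with h | h
      · exact absurd hne (by
          have := hltinv (A i) h
          have hBj := hB j
          intro hEq
          rw [hEq] at this
          omega)
      · rw [hπinv (A i) h] at hne; exact hdisj i j hne
    · simp only [Function.comp_apply]
      rcases lt_or_ge ((A i : ℕ)) m with h | h
      · have := hltinv (A i) h
        have := hB i
        exact Fin.lt_def.mpr (by omega)
      · rw [hπinv (A i) h]; exact hlt' i
  · intro A _; funext i; simp
  · intro A _; funext i; simp
  · intro A _
    rw [rename_chiAB]
    congr 1
    funext i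
    exact hfix i

lemma chiAB_homog {n d : ℕ} (A B : Fin d → Fin n) : (chiAB A B).IsHomogeneous d := by
  have : ∀ i : Fin d, (X (A i) - X (B i) : MvPolynomial (Fin n) ℝ).IsHomogeneous 1 :=
    fun i => (isHomogeneous_X _ _).sub (isHomogeneous_X _ _)
  simpa [chiAB] using IsHomogeneous.prod Finset.univ _ (fun _ => 1) (fun i _ => this i)

open Classical in
/-- kill lemma: sum over perms fixing ≥ m of rename π chiAB A B is zero
    when B i₀ < m for some i₀. -/
lemma sum_rename_chiAB_eq_zero {n d m : ℕ} (A B : Fin d → Fin n)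
    (hAinj : Function.Injective A) (hBinj : Function.Injective B)
    (hdisj : ∀ i j, A i ≠ B j) (hAB : ∀ i, A i < B i)
    (i₀ : Fin d) (hi₀ : (B i₀ : ℕ) < m) :
    ∑ π ∈ Finset.univ.filter
        (fun π : Equiv.Perm (Fin n) => ∀ i : Fin n, m ≤ (i : ℕ) → π i = i),
      rename ⇑π (chiAB A B) = 0 := by
  have hAi₀ : (A i₀ : ℕ) < m := by have := hAB i₀; rw [Fin.lt_def] at this; omega
  set τ : Equiv.Perm (Fin n) := Equiv.swap (A i₀) (B i₀) with hτ
  apply Finset.sum_involution (fun π _ => π * τ)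
  · intro π hπ
    -- rename (π τ) chiAB = - rename π chiAB
    have key : rename ⇑(π * τ) (chiAB A B) = - rename ⇑π (chiAB A B) := by
      unfold chiAB
      rw [map_prod, map_prod]
      set f : Fin d → MvPolynomial (Fin n) ℝ :=
        fun i => (rename ⇑π) (X (A i) - X (B i)) with hf
      set f' : Fin d → MvPolynomial (Fin n) ℝ :=
        fun i => (rename ⇑(π * τ)) (X (A i) - X (B i)) with hf'
      have hneg : f' i₀ = - f i₀ := by
        simp only [hf, hf', map_sub, rename_X, Equiv.Perm.mul_apply, hτ,
          Equiv.swap_apply_left, Equiv.swap_apply_right, neg_sub]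
      have hsame : ∀ i ∈ Finset.univ.erase i₀, f' i = f i := by
        intro i hi
        have h : i ≠ i₀ := Finset.ne_of_mem_erase hi
        have hA : τ (A i) = A i := by
          apply Equiv.swap_apply_of_ne_of_ne
          · exact fun hc => h (hAinj hc)
          · exact hdisj i i₀
        have hBi : τ (B i) = B i := by
          apply Equiv.swap_apply_of_ne_of_ne
          · exact fun hc => hdisj i₀ i hc.symm
          · exact fun hc => h (hBinj hc)
        simp only [hf, hf', map_sub, rename_X, Equiv.Perm.mul_apply, hA, hBi]
      calc ∏ i, f' i = f' i₀ * ∏ i ∈ Finset.univ.erase i₀, f' i :=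
            (Finset.mul_prod_erase Finset.univ f' (Finset.mem_univ i₀)).symm
        _ = (- f i₀) * ∏ i ∈ Finset.univ.erase i₀, f i := by
            rw [hneg, Finset.prod_congr rfl hsame]
        _ = - (f i₀ * ∏ i ∈ Finset.univ.erase i₀, f i) := by ring
        _ = - ∏ i, f i := by
            rw [Finset.mul_prod_erase Finset.univ f (Finset.mem_univ i₀)]
    rw [key]; ring
  · intro π hπ _
    intro hc
    have : τ = 1 := by
      have := mul_right_cancel (a := π * τ) (b := τ) (c := π)
      calc τ = π⁻¹ * (π * τ) := by group
        _ = π⁻¹ * π := by rw [hc]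
        _ = 1 := by group
    have h2 : τ (A i₀) = A i₀ := by rw [this]; rfl
    rw [hτ, Equiv.swap_apply_left] at h2
    exact absurd h2 (fun hc2 => (hdisj i₀ i₀) hc2.symm)
  · intro π hπ
    simp only [Finset.mem_filter, Finset.mem_univ, true_and] at hπ ⊢
    intro i hi
    have hτi : τ i = i := by
      apply Equiv.swap_apply_of_ne_of_ne
      · intro hc; rw [hc] at hi; omega
      · intro hc; rw [hc] at hi; omega
    rw [Equiv.Perm.mul_apply, hτi, hπ i hi]
  · intro π hπ
    rw [mul_assoc, hτ, Equiv.swap_mul_self, mul_one]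


open Classical in
lemma card_fixing {n m : ℕ} (hmn : m ≤ n) :
    (Finset.univ.filter
      (fun π : Equiv.Perm (Fin n) => ∀ i : Fin n, m ≤ (i : ℕ) → π i = i)).card
      = m.factorial := by
  classical
  have h1 : (Finset.univ.filter
      (fun π : Equiv.Perm (Fin n) => ∀ i : Fin n, m ≤ (i : ℕ) → π i = i)).card
      = Fintype.card {π : Equiv.Perm (Fin n) // ∀ i : Fin n, m ≤ (i : ℕ) → π i = i} := by
    rw [Fintype.card_subtype]
  rw [h1]
  have e0 : {π : Equiv.Perm (Fin n) // ∀ i : Fin n, m ≤ (i : ℕ) → π i = i}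
      ≃ {π : Equiv.Perm (Fin n) // ∀ i : Fin n, ¬ ((i : ℕ) < m) → π i = i} := by
    apply Equiv.subtypeEquivRight
    intro π
    constructor
    · intro h i hi; exact h i (not_lt.mp hi)
    · intro h i hi; exact h i (not_lt.mpr hi)
  have e1 := (Equiv.Perm.subtypeEquivSubtypePerm (fun i : Fin n => (i : ℕ) < m)).symm
  have e2 : {i : Fin n // (i : ℕ) < m} ≃ Fin m :=
    { toFun := fun x => ⟨(x.1 : ℕ), x.2⟩
      invFun := fun y => ⟨⟨(y : ℕ), lt_of_lt_of_le y.2 hmn⟩, y.2⟩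
      left_inv := fun x => by ext; rfl
      right_inv := fun y => rfl }
  calc Fintype.card {π : Equiv.Perm (Fin n) // ∀ i : Fin n, m ≤ (i : ℕ) → π i = i}
      = Fintype.card (Equiv.Perm {i : Fin n // (i : ℕ) < m}) :=
        Fintype.card_congr ((e0.trans e1).symm.symm)
    _ = Fintype.card (Equiv.Perm (Fin m)) :=
        Fintype.card_congr (Equiv.permCongr e2)
    _ = m.factorial := by simp [Fintype.card_perm]

open Classical in
/-- evaluation of chiB B₀ at the indicator of the complement of range B₀ -/
lemma eval_chiB_self {n d : ℕ} (B₀ : Fin d → Fin n) (h : IsTopSet B₀) :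
    eval (fun j : Fin n => if ∃ k, B₀ k = j then (0 : ℝ) else 1) (chiB B₀)
      = ((Finset.univ.filter (fun A : Fin d → Fin n =>
          Function.Injective A ∧ (∀ i j, A i ≠ B₀ j) ∧ ∀ i, A i < B₀ i)).card : ℝ) := by
  unfold chiB
  rw [map_sum]
  rw [Finset.sum_congr rfl (fun A hA => ?_), Finset.sum_const, nsmul_eq_mul, mul_one]
  simp only [Finset.mem_filter, Finset.mem_univ, true_and] at hA
  obtain ⟨hinj, hdisj, hlt⟩ := hA
  unfold chiAB
  rw [map_prod]
  rw [Finset.prod_congr rfl (fun i _ => ?_), Finset.prod_const_one]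
  simp only [map_sub, eval_X]
  rw [if_neg (by push_neg; intro k; exact fun hc => hdisj i k hc.symm),
    if_pos ⟨i, rfl⟩, sub_zero]

open Classical in
/-- evaluation of chiB B at the indicator of complement of range B₀ is zero
when B ≠ B₀ is a top set with weight at most that of B₀. -/
lemma eval_chiB_ne {n d : ℕ} (B₀ B : Fin d → Fin n) (h₀ : StrictMono B₀)
    (hB : IsTopSet B) (hne : B ≠ B₀)
    (hw : ∑ i, (B i : ℕ) ≤ ∑ i, (B₀ i : ℕ)) :
    eval (fun j : Fin n => if ∃ k, B₀ k = j then (0 : ℝ) else 1) (chiB B) = 0 := by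
  unfold chiB
  rw [map_sum]
  apply Finset.sum_eq_zero
  intro A hA
  simp only [Finset.mem_filter, Finset.mem_univ, true_and] at hA
  obtain ⟨hAinj, hdisj, hlt⟩ := hA
  unfold chiAB
  rw [map_prod]
  by_contra hprod
  replace hprod : ∀ i ∈ Finset.univ, (eval (fun j : Fin n => if ∃ k, B₀ k = j then (0 : ℝ) else 1)) (X (A i) - X (B i)) ≠ 0 :=
    Finset.prod_ne_zero_iff.mp hprod
  set x₀ : Fin n → ℝ := fun j => if ∃ k, B₀ k = j then (0 : ℝ) else 1 with hx₀
  have hBinj : Function.Injective B := hB.1.injective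
  -- define the choice function c
  set c : Fin d → Fin n := fun i => if ∃ k, B₀ k = A i then A i else B i with hc
  have hcT : ∀ i, ∃ k, B₀ k = c i := by
    intro i
    have hfac := hprod i (Finset.mem_univ i)
    simp only [map_sub, eval_X] at hfac
    by_cases hAi : ∃ k, B₀ k = A i
    · simp only [hc, if_pos hAi]; exact hAi
    · simp only [hc, if_neg hAi]
      by_contra hBi
      rw [hx₀] at hfac
      simp only [if_neg hAi, if_neg hBi, sub_self] at hfac
      exact hfac rfl
  have hcle : ∀ i, (c i : ℕ) ≤ (B i : ℕ) := by
    intro i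
    by_cases hAi : ∃ k, B₀ k = A i
    · simp only [hc, if_pos hAi]; exact le_of_lt (hlt i)
    · simp only [hc, if_neg hAi]
      exact le_rfl
  have hcinj : Function.Injective c := by
    intro i j hij
    by_contra hne'
    have hAB : ∀ i : Fin d, c i = A i ∨ c i = B i := by
      intro i; by_cases hAi : ∃ k, B₀ k = A i
      · left; simp [hc, if_pos hAi]
      · right; simp [hc, if_neg hAi]
    rcases hAB i with hi | hi <;> rcases hAB j with hj | hj <;>
      rw [hi, hj] at hij
    · exact hne' (hAinj hij)
    · exact hdisj i j hij
    · exact hdisj j i hij.symm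
    · exact hne' (hBinj hij)
  -- image of c equals image of B₀
  have himg : Finset.univ.image c = Finset.univ.image B₀ := by
    apply Finset.eq_of_subset_of_card_le
    · intro x hx
      simp only [Finset.mem_image, Finset.mem_univ, true_and] at hx ⊢
      obtain ⟨i, hi⟩ := hx
      obtain ⟨k, hk⟩ := hcT i
      exact ⟨k, by rw [hk, hi]⟩
    · rw [Finset.card_image_of_injective _ h₀.injective,
        Finset.card_image_of_injective _ hcinj]
  -- sums
  have hsum_c : ∑ i, (c i : ℕ) = ∑ i, (B₀ i : ℕ) := by
    rw [← Finset.sum_image (f := fun x : Fin n => (x : ℕ))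
        (g := c) (fun i _ j _ h => hcinj h),
      ← Finset.sum_image (f := fun x : Fin n => (x : ℕ))
        (g := B₀) (fun i _ j _ h => h₀.injective h), himg]
  have hsum_le : ∑ i, (c i : ℕ) ≤ ∑ i, (B i : ℕ) :=
    Finset.sum_le_sum (fun i _ => hcle i)
  have heq : ∀ i, (c i : ℕ) = (B i : ℕ) := by
    by_contra hcon
    push_neg at hcon
    obtain ⟨i₁, hi₁⟩ := hcon
    have hstrict : ∑ i, (c i : ℕ) < ∑ i, (B i : ℕ) :=
      Finset.sum_lt_sum (fun i _ => hcle i)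
        ⟨i₁, Finset.mem_univ i₁, lt_of_le_of_ne (hcle i₁) hi₁⟩
    omega
  have hcB : c = B := funext fun i => Fin.ext (heq i)
  -- then range B = range B₀, contradiction with B ≠ B₀
  have hrange : Set.range B = Set.range B₀ := by
    have := himg
    rw [hcB] at this
    rw [← Set.image_univ, ← Set.image_univ, ← Finset.coe_univ]
    rw [← Finset.coe_image, ← Finset.coe_image, this]
  have hfin : B = B₀ := by
    have inst : WellFoundedLT (Fin d) := inferInstance
    exact (@StrictMono.range_inj (Fin d) (Fin n) Fin.instLinearOrder
      (by infer_instance) inst B B₀ hB.1 h₀).mp hrange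
  exact hne hfin

open Classical in
lemma chiB_indep {n d : ℕ} (c : (Fin d → Fin n) → ℝ) (s : Finset (Fin d → Fin n))
    (hs : ∀ B ∈ s, IsTopSet B)
    (h0 : ∑ B ∈ s, c B • chiB B = 0) :
    ∀ B ∈ s, c B = 0 := by
  by_contra hcon
  push_neg at hcon
  obtain ⟨Bbad, hBbad, hcbad⟩ := hcon
  set t := s.filter (fun B => c B ≠ 0) with ht
  have htne : t.Nonempty := ⟨Bbad, Finset.mem_filter.mpr ⟨hBbad, hcbad⟩⟩
  obtain ⟨B₀, hB₀t, hB₀max⟩ :=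
    Finset.exists_max_image t (fun B => ∑ i, (B i : ℕ)) htne
  have hB₀s : B₀ ∈ s := (Finset.mem_filter.mp hB₀t).1
  have hB₀c : c B₀ ≠ 0 := (Finset.mem_filter.mp hB₀t).2
  have hB₀top : IsTopSet B₀ := hs B₀ hB₀s
  set x₀ : Fin n → ℝ := fun j => if ∃ k, B₀ k = j then (0 : ℝ) else 1 with hx₀
  have heval := congrArg (eval x₀) h0
  rw [map_sum, map_zero] at heval
  have hterm : ∀ B ∈ s, B ≠ B₀ →
      eval x₀ (c B • chiB B) = 0 := by
    intro B hBs hBne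
    rcases eq_or_ne (c B) 0 with h | h
    · rw [h, zero_smul, map_zero]
    · have hBt : B ∈ t := Finset.mem_filter.mpr ⟨hBs, h⟩
      have hwle := hB₀max B hBt
      rw [smul_eq_C_mul, map_mul, eval_C]
      rw [eval_chiB_ne B₀ B hB₀top.1 (hs B hBs) hBne hwle, mul_zero]
  rw [Finset.sum_eq_single B₀ hterm (fun h => absurd hB₀s h)] at heval
  rw [smul_eq_C_mul, map_mul, eval_C, eval_chiB_self B₀ hB₀top] at heval
  have hcard : 0 < (Finset.univ.filter (fun A : Fin d → Fin n =>
      Function.Injective A ∧ (∀ i j, A i ≠ B₀ j) ∧ ∀ i, A i < B₀ i)).card := by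
    obtain ⟨A, hA⟩ := hB₀top.2
    exact Finset.card_pos.mpr ⟨A, Finset.mem_filter.mpr ⟨Finset.mem_univ A, hA⟩⟩
  have : (0:ℝ) < ((Finset.univ.filter (fun A : Fin d → Fin n =>
      Function.Injective A ∧ (∀ i j, A i ≠ B₀ j) ∧ ∀ i, A i < B₀ i)).card : ℝ) := by
    exact_mod_cast hcard
  have := mul_eq_zero.mp heval
  rcases this with h | h
  · exact hB₀c h
  · linarith

lemma rename_smul {n : ℕ} (g : Fin n → Fin n) (c : ℝ) (p : MvPolynomial (Fin n) ℝ) :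
    rename g (c • p) = c • rename g p := by
  rw [smul_eq_C_mul, smul_eq_C_mul, map_mul, rename_C]

open Classical in
/-- Averaging a harmonic multilinear polynomial `f = ∑_B f̂(B) χ_B` over all
permutations of the first `m` coordinates keeps exactly the terms with `B`
disjoint from `[m]`; in particular `f` is invariant under all permutations of the
first `m` coordinates iff `f̂(B) = 0` whenever `B` intersects `[m]`.
(0-based: `[m]` is the set of indices `< m`.) -/
theorem average_over_symmetric_group {n : ℕ} (f : MvPolynomial (Fin n) ℝ)
    (hml : IsMultilinear f) (hh : IsHarmonic f)
    (fc : ∀ d : ℕ, (Fin d → Fin n) → ℝ)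
    (hexp : f = ∑ d ∈ Finset.range (n + 1),
      ∑ B ∈ Finset.univ.filter (fun B : Fin d → Fin n => IsTopSet B), fc d B • chiB B)
    (m : ℕ) (hm1 : 1 ≤ m) (hmn : m ≤ n) :
    (((m.factorial : ℝ))⁻¹ • ∑ π ∈ Finset.univ.filter
        (fun π : Equiv.Perm (Fin n) => ∀ i : Fin n, m ≤ (i : ℕ) → π i = i),
        MvPolynomial.rename (⇑π) f)
      = ∑ d ∈ Finset.range (n + 1),
          ∑ B ∈ Finset.univ.filter
            (fun B : Fin d → Fin n => IsTopSet B ∧ ∀ i, m ≤ (B i : ℕ)),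
            fc d B • chiB B
    ∧ ((∀ π : Equiv.Perm (Fin n), (∀ i : Fin n, m ≤ (i : ℕ) → π i = i) →
          MvPolynomial.rename (⇑π) f = f)
        ↔ ∀ (d : ℕ) (B : Fin d → Fin n), IsTopSet B → (∃ i, (B i : ℕ) < m) →
            fc d B = 0) := by
  classical
  set Sm := Finset.univ.filter
    (fun π : Equiv.Perm (Fin n) => ∀ i : Fin n, m ≤ (i : ℕ) → π i = i) with hSm
  have hcard : Sm.card = m.factorial := card_fixing hmn
  have hfacne : ((m.factorial : ℝ)) ≠ 0 := Nat.cast_ne_zero.mpr (Nat.factorial_ne_zero m)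
  have hcancel : ∀ x : MvPolynomial (Fin n) ℝ,
      (m.factorial : ℝ)⁻¹ • (m.factorial • x) = x := by
    intro x
    rw [← Nat.cast_smul_eq_nsmul ℝ, smul_smul, inv_mul_cancel₀ hfacne, one_smul]
  -- sum over Sm of renames of chiB, for B intersecting [m]
  have hkill : ∀ (d : ℕ) (B : Fin d → Fin n), IsTopSet B → (∃ i, (B i : ℕ) < m) →
      ∑ π ∈ Sm, rename ⇑π (chiB B) = 0 := by
    intro d B hB hint
    obtain ⟨i₀, hi₀⟩ := hint
    unfold chiB
    rw [Finset.sum_congr rfl (fun (π : Equiv.Perm (Fin n)) _ => map_sum (rename (⇑π : Fin n → Fin n)) _ _)]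
    rw [Finset.sum_comm]
    apply Finset.sum_eq_zero
    intro A hA
    simp only [Finset.mem_filter, Finset.mem_univ, true_and] at hA
    exact sum_rename_chiAB_eq_zero A B hA.1 hB.1.injective hA.2.1 hA.2.2 i₀ hi₀
  -- sum over Sm of renames of chiB, for B disjoint from [m]
  have hinvB : ∀ (d : ℕ) (B : Fin d → Fin n), (∀ i, m ≤ (B i : ℕ)) →
      ∑ π ∈ Sm, rename ⇑π (chiB B) = m.factorial • chiB B := by
    intro d B hB
    rw [Finset.sum_congr rfl (fun π hπ => rename_chiB_invariant B hB π
      (by simpa [hSm, Finset.mem_filter] using hπ))]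
    rw [Finset.sum_const, hcard]
  -- the main sum computation
  have hmain : ∑ π ∈ Sm, rename ⇑π f
      = m.factorial • ∑ d ∈ Finset.range (n + 1),
          ∑ B ∈ Finset.univ.filter
            (fun B : Fin d → Fin n => IsTopSet B ∧ ∀ i, m ≤ (B i : ℕ)),
            fc d B • chiB B := by
    have step1 : ∀ π : Equiv.Perm (Fin n), rename ⇑π f
        = ∑ d ∈ Finset.range (n + 1),
            ∑ B ∈ Finset.univ.filter (fun B : Fin d → Fin n => IsTopSet B),
              fc d B • rename ⇑π (chiB B) := by
      intro π
      rw [hexp, map_sum]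
      refine Finset.sum_congr rfl fun d _ => ?_
      rw [map_sum]
      exact Finset.sum_congr rfl fun B _ => rename_smul _ _ _
    rw [Finset.sum_congr rfl (fun π _ => step1 π)]
    rw [Finset.sum_comm]
    rw [Finset.smul_sum]
    refine Finset.sum_congr rfl fun d _ => ?_
    rw [Finset.sum_comm]
    have step2 : ∀ B ∈ Finset.univ.filter (fun B : Fin d → Fin n => IsTopSet B),
        ∑ π ∈ Sm, fc d B • rename ⇑π (chiB B)
          = fc d B • ∑ π ∈ Sm, rename ⇑π (chiB B) := fun B _ => (Finset.smul_sum).symm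
    rw [Finset.sum_congr rfl step2]
    -- split the filter over top sets
    rw [← Finset.sum_filter_add_sum_filter_not
      (Finset.univ.filter (fun B : Fin d → Fin n => IsTopSet B))
      (fun B => ∀ i, m ≤ (B i : ℕ))]
    rw [Finset.filter_filter, Finset.filter_filter]
    have hz : ∑ B ∈ Finset.univ.filter
        (fun B : Fin d → Fin n => IsTopSet B ∧ ¬ ∀ i, m ≤ (B i : ℕ)),
        fc d B • ∑ π ∈ Sm, rename ⇑π (chiB B) = 0 := by
      apply Finset.sum_eq_zero
      intro B hB
      simp only [Finset.mem_filter, Finset.mem_univ, true_and] at hB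
      have hint : ∃ i, (B i : ℕ) < m := by push_neg at hB; exact hB.2
      rw [hkill d B hB.1 hint, smul_zero]
    rw [hz, add_zero]
    rw [Finset.sum_congr rfl (fun B hB => ?_), Finset.smul_sum]
    simp only [Finset.mem_filter, Finset.mem_univ, true_and] at hB
    rw [hinvB d B hB.2, smul_comm]
  have part1 : (((m.factorial : ℝ))⁻¹ • ∑ π ∈ Sm, rename ⇑π f)
      = ∑ d ∈ Finset.range (n + 1),
          ∑ B ∈ Finset.univ.filter
            (fun B : Fin d → Fin n => IsTopSet B ∧ ∀ i, m ≤ (B i : ℕ)),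
            fc d B • chiB B := by
    rw [hmain, hcancel]
  refine ⟨part1, ?_, ?_⟩
  · -- invariance → coefficients vanish
    intro hinv d B htop hint
    have hf : f = ∑ d ∈ Finset.range (n + 1),
        ∑ B ∈ Finset.univ.filter
          (fun B : Fin d → Fin n => IsTopSet B ∧ ∀ i, m ≤ (B i : ℕ)),
          fc d B • chiB B := by
      rw [← part1]
      have : ∑ π ∈ Sm, rename ⇑π f = m.factorial • f := by
        rw [Finset.sum_congr rfl (fun π hπ => hinv π
          (by simpa [hSm, Finset.mem_filter] using hπ))]
        rw [Finset.sum_const, hcard]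
      rw [this, hcancel]
    -- the "intersecting" part sums to zero
    have hzero : ∑ e ∈ Finset.range (n + 1),
        ∑ B ∈ Finset.univ.filter
          (fun B : Fin e → Fin n => IsTopSet B ∧ ∃ i, (B i : ℕ) < m),
          fc e B • chiB B = 0 := by
      have h1 : ∀ e : ℕ,
          (∑ B ∈ Finset.univ.filter (fun B : Fin e → Fin n => IsTopSet B),
            fc e B • chiB B)
          = (∑ B ∈ Finset.univ.filter
              (fun B : Fin e → Fin n => IsTopSet B ∧ ∀ i, m ≤ (B i : ℕ)),
              fc e B • chiB B)
            + ∑ B ∈ Finset.univ.filter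
              (fun B : Fin e → Fin n => IsTopSet B ∧ ∃ i, (B i : ℕ) < m),
              fc e B • chiB B := by
        intro e
        rw [← Finset.sum_filter_add_sum_filter_not
          (Finset.univ.filter (fun B : Fin e → Fin n => IsTopSet B))
          (fun B => ∀ i, m ≤ (B i : ℕ))]
        rw [Finset.filter_filter, Finset.filter_filter]
        congr 2
        apply Finset.filter_congr
        intro B _
        constructor
        · rintro ⟨h1, h2⟩; push_neg at h2; exact ⟨h1, h2⟩
        · rintro ⟨h1, h2⟩; refine ⟨h1, ?_⟩; push_neg; exact h2
      have h2 := hexp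
      rw [Finset.sum_congr rfl (fun e _ => h1 e), Finset.sum_add_distrib] at h2
      nth_rewrite 1 [hf] at h2
      exact (add_eq_left.mp h2.symm)
    -- homogeneous components
    have hQmem : ∀ e : ℕ,
        (∑ B ∈ Finset.univ.filter
          (fun B : Fin e → Fin n => IsTopSet B ∧ ∃ i, (B i : ℕ) < m),
          fc e B • chiB B) ∈ homogeneousSubmodule (Fin n) ℝ e := by
      intro e
      apply Submodule.sum_mem
      intro B _
      apply Submodule.smul_mem
      unfold chiB
      apply Submodule.sum_mem
      intro A _
      exact (mem_homogeneousSubmodule _ _).mpr (chiAB_homog A B)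
    have hdn : d ≤ n := by
      have := Fintype.card_le_of_injective B htop.1.injective
      simpa using this
    have hQd : ∑ B ∈ Finset.univ.filter
        (fun B : Fin d → Fin n => IsTopSet B ∧ ∃ i, (B i : ℕ) < m),
        fc d B • chiB B = 0 := by
      have hc := congrArg (homogeneousComponent d) hzero
      rw [map_sum, map_zero] at hc
      rw [Finset.sum_congr rfl
        (fun e _ => homogeneousComponent_of_mem (hQmem e))] at hc
      rw [Finset.sum_ite_eq] at hc
      rw [if_pos (Finset.mem_range.mpr (Nat.lt_succ_of_le hdn))] at hc
      exact hc
    exact chiB_indep (fc d) _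
      (fun B hB => ((Finset.mem_filter.mp hB).2).1) hQd B
      (Finset.mem_filter.mpr ⟨Finset.mem_univ B, htop, hint⟩)
  · -- coefficients vanish → invariance
    intro hc π hπ
    rw [hexp, map_sum]
    refine Finset.sum_congr rfl fun d _ => ?_
    rw [map_sum]
    refine Finset.sum_congr rfl fun B hB => ?_
    simp only [Finset.mem_filter, Finset.mem_univ, true_and] at hB
    by_cases hall : ∀ i, m ≤ (B i : ℕ)
    · rw [rename_smul, rename_chiB_invariant B hall π hπ]
    · push_neg at hall
      simp [hc d B hB hall]
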